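/- Base change of dilatations: let f : A → B be a ring morphism, N_i = f(M_i)·B and b_i = f(a_i). Then B[{N_i/b_i}_{i∈I}] is isomorphic to the quotient of B ⊗_A A[{M_i/a_i}_{i∈I}] by the ideal of elements annihilated by some b^ν with ν ∈ ⊕_I ℕ. -/

import Mathlib

open scoped TensorProduct

noncomputable section

variable {A : Type*} [CommRing A] {I : Type*}

/-- The multiplicative submonoid generated by the elements `a_i` of the multi-center. -/
def dilSubmonoid (a : I → A) : Submonoid A := Submonoid.closure (Set.range a)

lemma a_mem_dilSubmonoid (a : I → A) (i : I) : a i ∈ dilSubmonoid a :=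
  Submonoid.subset_closure ⟨i, rfl⟩

/-- `a^ν` for `ν ∈ ⊕_{i∈I} ℕ`. -/
def apow (a : I → A) (ν : I →₀ ℕ) : A := ν.prod fun i n => a i ^ n

lemma apow_mem (a : I → A) (ν : I →₀ ℕ) : apow a ν ∈ dilSubmonoid a :=
  Submonoid.prod_mem _ fun i _ => pow_mem (a_mem_dilSubmonoid a i) _

/-- The product ideal `L^ν = ∏_i (M_i + (a_i))^{ν_i}`. -/
def Lpow (M : I → Ideal A) (a : I → A) (ν : I →₀ ℕ) : Ideal A :=
  ν.prod fun i n => (M i + Ideal.span {a i}) ^ n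

/-- The fraction `m / a_i` in the localization at the submonoid generated by the `a_i`. -/
def dilFrac (a : I → A) (i : I) (m : A) : Localization (dilSubmonoid a) :=
  Localization.mk m ⟨a i, a_mem_dilSubmonoid a i⟩

/-- The multi-centered dilatation `A[{M_i/a_i}]`, realized as the sub-`A`-algebra of the
localization `S⁻¹A` generated by the fractions `m / a_i` with `m ∈ M_i`. -/
def dilatation (M : I → Ideal A) (a : I → A) :
    Subalgebra A (Localization (dilSubmonoid a)) :=
  Algebra.adjoin A (⋃ i, dilFrac a i '' (M i))
set_option synthInstance.maxHeartbeats 1000000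
set_option maxHeartbeats 1000000


/-- The canonical map between localizations induced by the ring morphism `algebraMap A B`. -/
def locMapBase (a : I → A) (B : Type*) [CommRing B] [Algebra A B] :
    Localization (dilSubmonoid a) →+*
      Localization (dilSubmonoid fun i => algebraMap A B (a i)) :=
  IsLocalization.map (M := dilSubmonoid a)
    (T := dilSubmonoid fun i => algebraMap A B (a i))
    (Localization (dilSubmonoid fun i => algebraMap A B (a i))) (algebraMap A B)
    (Submonoid.closure_le.mpr (by
      rintro x ⟨i, rfl⟩
      exact a_mem_dilSubmonoid (fun i => algebraMap A B (a i)) i))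

section Stmt13Aux

lemma apow_zero (a : I → A) : apow a 0 = 1 := Finsupp.prod_zero_index

lemma apow_add (a : I → A) (μ ν : I →₀ ℕ) : apow a (μ + ν) = apow a μ * apow a ν :=
  Finsupp.prod_add_index' (fun _ => pow_zero _) (fun _ m n => pow_add _ m n)

lemma apow_single (a : I → A) (i : I) : apow a (Finsupp.single i 1) = a i := by
  simp [apow, Finsupp.prod_single_index]

lemma exists_apow (a : I → A) {s : A} (hs : s ∈ dilSubmonoid a) : ∃ ν, apow a ν = s := by
  induction hs using Submonoid.closure_induction with
  | mem x hx => obtain ⟨i, rfl⟩ := hx; exact ⟨Finsupp.single i 1, apow_single a i⟩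
  | one => exact ⟨0, apow_zero a⟩
  | mul x y _ _ hx hy =>
      obtain ⟨μ, rfl⟩ := hx; obtain ⟨ν, rfl⟩ := hy
      exact ⟨μ + ν, apow_add a μ ν⟩

lemma algebraMap_apow {B : Type*} [CommRing B] [Algebra A B] (a : I → A) (ν : I →₀ ℕ) :
    algebraMap A B (apow a ν) = apow (fun i => algebraMap A B (a i)) ν := by
  simpa [apow] using map_finsuppProd (algebraMap A B) ν (fun i n => a i ^ n)

lemma exists_apow_mul_mem_range (M : I → Ideal A) (a : I → A)
    {x : Localization (dilSubmonoid a)} (hx : x ∈ dilatation M a) :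
    ∃ (ν : I →₀ ℕ) (m : A),
      algebraMap A (Localization (dilSubmonoid a)) (apow a ν) * x
        = algebraMap A (Localization (dilSubmonoid a)) m := by
  induction hx using Algebra.adjoin_induction with
  | mem x hx =>
      obtain ⟨_, ⟨i, rfl⟩, m, hm, rfl⟩ := hx
      refine ⟨Finsupp.single i 1, m, ?_⟩
      rw [apow_single, dilFrac, ← Localization.mk_one_eq_algebraMap,
        ← Localization.mk_one_eq_algebraMap, Localization.mk_mul]
      rw [Localization.mk_eq_mk_iff]
      apply Localization.r_of_eq
      simp [mul_comm]
  | algebraMap r => exact ⟨0, r, by rw [apow_zero, map_one, one_mul]⟩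
  | add x y _ _ hx hy =>
      obtain ⟨ν, m, hm⟩ := hx; obtain ⟨μ, n, hn⟩ := hy
      refine ⟨ν + μ, apow a μ * m + apow a ν * n, ?_⟩
      rw [apow_add, map_mul, map_add, map_mul, map_mul]
      calc algebraMap A _ (apow a ν) * algebraMap A _ (apow a μ) * (x + y)
          = algebraMap A _ (apow a μ) * (algebraMap A _ (apow a ν) * x)
            + algebraMap A _ (apow a ν) * (algebraMap A _ (apow a μ) * y) := by ring
        _ = _ := by rw [hm, hn]
  | mul x y _ _ hx hy =>
      obtain ⟨ν, m, hm⟩ := hx; obtain ⟨μ, n, hn⟩ := hy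
      refine ⟨ν + μ, m * n, ?_⟩
      rw [apow_add, map_mul, map_mul]
      calc algebraMap A _ (apow a ν) * algebraMap A _ (apow a μ) * (x * y)
          = (algebraMap A _ (apow a ν) * x) * (algebraMap A _ (apow a μ) * y) := by ring
        _ = _ := by rw [hm, hn, ← map_mul]

lemma exists_apow_smul (M : I → Ideal A) (a : I → A) (x : ↥(dilatation M a)) :
    ∃ (ν : I →₀ ℕ) (m : A),
      algebraMap A ↥(dilatation M a) (apow a ν) * x = algebraMap A _ m := by
  obtain ⟨ν, m, h⟩ := exists_apow_mul_mem_range M a x.2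
  exact ⟨ν, m, Subtype.ext (by simpa using h)⟩

lemma locMapBase_dilFrac {B : Type*} [CommRing B] [Algebra A B] (a : I → A) (i : I) (m : A) :
    locMapBase a B (dilFrac a i m)
      = dilFrac (fun i => algebraMap A B (a i)) i (algebraMap A B m) := by
  rw [dilFrac, dilFrac, Localization.mk_eq_mk', Localization.mk_eq_mk', locMapBase]
  exact IsLocalization.map_mk' _ _ _

lemma locMapBase_algebraMap {B : Type*} [CommRing B] [Algebra A B] (a : I → A) (r : A) :
    locMapBase a B (algebraMap A _ r) = algebraMap B _ (algebraMap A B r) :=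
  IsLocalization.map_eq _ r

end Stmt13Aux

set_option maxHeartbeats 8000000

/-- base change: `B[{f(M_i)B / f(a_i)}]` is the quotient of
`B ⊗_A A[{M_i/a_i}]` by the ideal of elements annihilated by some `b^ν`. -/
theorem stmt13 {B : Type*} [CommRing B] [Algebra A B] (M : I → Ideal A) (a : I → A) :
    ∃ g : (B ⊗[A] ↥(dilatation M a)) →ₐ[B]
        ↥(dilatation (fun i => (M i).map (algebraMap A B))
            (fun i => algebraMap A B (a i))),
      Function.Surjective g ∧
      (∀ x : ↥(dilatation M a),
        ((g (1 ⊗ₜ[A] x) :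
            Localization (dilSubmonoid fun i => algebraMap A B (a i))))
          = locMapBase a B ((x : Localization (dilSubmonoid a)))) ∧
      ∀ y, g y = 0 ↔ ∃ ν : I →₀ ℕ,
        algebraMap B (B ⊗[A] ↥(dilatation M a))
            (apow (fun i => algebraMap A B (a i)) ν) * y = 0 := by
  classical
  set b : I → B := fun i => algebraMap A B (a i) with hb
  set N : I → Ideal B := fun i => (M i).map (algebraMap A B) with hN
  -- the image of the dilatation lands in the new dilatation
  have hmem : ∀ x ∈ dilatation M a, locMapBase a B x ∈ dilatation N b := by
    intro x hx
    induction hx using Algebra.adjoin_induction with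
    | mem x hx =>
        obtain ⟨_, ⟨i, rfl⟩, m, hm, rfl⟩ := hx
        rw [locMapBase_dilFrac]
        exact Algebra.subset_adjoin
          (Set.mem_iUnion.mpr ⟨i, Set.mem_image_of_mem _ (Ideal.mem_map_of_mem _ hm)⟩)
    | algebraMap r =>
        rw [locMapBase_algebraMap]
        exact Subalgebra.algebraMap_mem _ _
    | add x y _ _ hx hy => rw [map_add]; exact add_mem hx hy
    | mul x y _ _ hx hy => rw [map_mul]; exact mul_mem hx hy
  letI : Algebra A ↥(dilatation N b) :=
    ((algebraMap B ↥(dilatation N b)).comp (algebraMap A B)).toAlgebra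
  letI : IsScalarTower A B ↥(dilatation N b) := IsScalarTower.of_algebraMap_eq fun _ => rfl
  -- the restricted algebra hom
  let ψ : ↥(dilatation M a) →ₐ[A] ↥(dilatation N b) :=
    { toFun := fun x => ⟨locMapBase a B x.1, hmem x.1 x.2⟩
      map_one' := by ext; simp
      map_mul' := fun x y => by ext; simp
      map_zero' := by ext; simp
      map_add' := fun x y => by ext; simp
      commutes' := fun r => by
        ext
        simp only [Subalgebra.coe_algebraMap]
        exact locMapBase_algebraMap a r }
  let g : (B ⊗[A] ↥(dilatation M a)) →ₐ[B] ↥(dilatation N b) :=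
    Algebra.TensorProduct.lift (Algebra.ofId B _) ψ (fun _ _ => Commute.all _ _)
  have hg1 : ∀ x : ↥(dilatation M a), g (1 ⊗ₜ[A] x) = ψ x := by
    intro x
    rw [show g (1 ⊗ₜ[A] x) = Algebra.ofId B _ 1 * ψ x from
      Algebra.TensorProduct.lift_tmul _ _ _ _ _]
    rw [map_one, one_mul]
  refine ⟨g, ?_, fun x => by rw [hg1]; rfl, fun y => ⟨?_, ?_⟩⟩
  · -- surjectivity
    intro z
    have hz : (z : Localization (dilSubmonoid b)) ∈
        Subalgebra.map (dilatation N b).val g.range := by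
      have h2 : (z : Localization (dilSubmonoid b)) ∈
          Algebra.adjoin B (⋃ i, dilFrac b i '' (N i)) := z.2
      refine Algebra.adjoin_le (show (⋃ i, dilFrac b i '' (N i) : Set (Localization (dilSubmonoid b))) ⊆ (Subalgebra.map (dilatation N b).val g.range : Set _) from ?_) h2
      rintro _ ⟨_, ⟨i, rfl⟩, w, hw, rfl⟩
      have hw' : w ∈ Ideal.span ((algebraMap A B) '' (M i)) := hw
      clear hw
      induction hw' using Submodule.span_induction with
      | mem w hwm =>
          obtain ⟨m, hm, rfl⟩ := hwm
          have hmem' : dilFrac a i m ∈ dilatation M a :=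
            Algebra.subset_adjoin (Set.mem_iUnion.mpr ⟨i, Set.mem_image_of_mem _ hm⟩)
          refine Subalgebra.mem_map.mpr ⟨g (1 ⊗ₜ[A] ⟨dilFrac a i m, hmem'⟩), ⟨_, rfl⟩, ?_⟩
          rw [hg1]
          exact locMapBase_dilFrac a i m
      | zero =>
          have : dilFrac b i (0 : B) = 0 := Localization.mk_zero _
          rw [this]; exact zero_mem _
      | add w w' _ _ hw hw' =>
          have : dilFrac b i (w + w') = dilFrac b i w + dilFrac b i w' :=
            (Localization.add_mk_self _ _ _).symm
          rw [this]; exact add_mem hw hw'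
      | smul c w _ hw =>
          have : dilFrac b i (c • w) = algebraMap B _ c * dilFrac b i w := by
            rw [smul_eq_mul, dilFrac, dilFrac, ← Localization.mk_one_eq_algebraMap,
              Localization.mk_mul, one_mul]
          rw [this]
          exact mul_mem (Subalgebra.algebraMap_mem _ _) hw
    obtain ⟨w, hw, hval⟩ := Subalgebra.mem_map.mp hz
    obtain ⟨y, hy⟩ := hw
    exact ⟨y, hy.symm ▸ Subtype.ext hval⟩
  · -- kernel, forward direction
    intro hy0
    -- first clear denominators in the tensor product
    have key : ∃ (ν : I →₀ ℕ) (β : B),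
        algebraMap B (B ⊗[A] ↥(dilatation M a)) (apow b ν) * y
          = algebraMap B (B ⊗[A] ↥(dilatation M a)) β := by
      clear hy0
      induction y using TensorProduct.induction_on with
      | zero => exact ⟨0, 0, by simp⟩
      | tmul c x =>
          obtain ⟨ν, m, h⟩ := exists_apow_smul M a x
          refine ⟨ν, c * algebraMap A B m, ?_⟩
          have h1 : ∀ β : B, algebraMap B (B ⊗[A] ↥(dilatation M a)) β = β ⊗ₜ[A] 1 :=
            fun β => rfl
          rw [h1, h1, Algebra.TensorProduct.tmul_mul_tmul, one_mul]
          have h2 : apow b ν * c = apow a ν • c := by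
            rw [Algebra.smul_def, hb, algebraMap_apow]
          rw [h2, TensorProduct.smul_tmul]
          have h3 : apow a ν • x = algebraMap A ↥(dilatation M a) m := by
            rw [Algebra.smul_def, h]
          rw [h3, Algebra.algebraMap_eq_smul_one, ← TensorProduct.smul_tmul,
            Algebra.smul_def, mul_comm c]
      | add y z hy hz =>
          obtain ⟨ν, β, h1⟩ := hy
          obtain ⟨μ, γ, h2⟩ := hz
          refine ⟨ν + μ, apow b μ * β + apow b ν * γ, ?_⟩
          have : algebraMap B (B ⊗[A] ↥(dilatation M a)) (apow b (ν + μ)) * (y + z)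
              = algebraMap B _ (apow b μ) * (algebraMap B _ (apow b ν) * y)
                + algebraMap B _ (apow b ν) * (algebraMap B _ (apow b μ) * z) := by
            rw [apow_add, map_mul]; ring
          rw [this, h1, h2, ← map_mul, ← map_mul, ← map_add]
    obtain ⟨ν, β, h⟩ := key
    have hβ : algebraMap B ↥(dilatation N b) β = 0 := by
      have := congrArg g h
      rw [map_mul, hy0, mul_zero, AlgHom.commutes] at this
      exact this.symm
    have hβ' : algebraMap B (Localization (dilSubmonoid b)) β = 0 :=
      congrArg Subtype.val hβ
    obtain ⟨⟨s, hs⟩, hsβ⟩ := (IsLocalization.map_eq_zero_iff (dilSubmonoid b) _ β).mp hβ'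
    obtain ⟨μ, rfl⟩ := exists_apow b hs
    refine ⟨μ + ν, ?_⟩
    rw [← hb, apow_add, map_mul, mul_assoc, h, ← map_mul]
    simp only at hsβ
    rw [hsβ, map_zero]
  · -- kernel, backward direction
    rintro ⟨ν, hν⟩
    have := congrArg g hν
    rw [map_mul, map_zero, AlgHom.commutes] at this
    have hval : algebraMap B (Localization (dilSubmonoid b)) (apow b ν) * (g y : _) = 0 :=
      congrArg Subtype.val this
    have hunit : IsUnit (algebraMap B (Localization (dilSubmonoid b)) (apow b ν)) :=
      IsLocalization.map_units _ ⟨apow b ν, apow_mem b ν⟩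
    have : (g y : Localization (dilSubmonoid b)) = 0 := by
      rcases hunit with ⟨u, hu⟩
      have := congrArg (fun t => (↑u⁻¹ : Localization (dilSubmonoid b)) * t) hval
      simpa [← hu, ← mul_assoc] using this
    exact Subtype.ext (by simpa using this)
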